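/- arXiv:2510.02928 — 4 statements merged into one kernel-verified Lean document; each statement's English description precedes it below -/
import Mathlib

section
/- Let c > 0 be constant, let h : ℝ₊ → ℝ be continuous, and let g satisfy g'(ρ) = ρ·h(ρ). Define ρ(x,y) = ‖(x,y) − (x₀,y₀)‖, v(x,y) = −h(ρ(x,y))·((x−x₀, y−y₀))⊥ and p(x,y) = P₀ − c·g(ρ(x,y)). Then away from (x₀,y₀), (v, p) is a stationary solution of the acoustic system with pure Coriolis source: ∇p = c·v⊥ and ∇·v = 0. -/
open Real

/-- Steady vortex with a pure (constant) Coriolis source: with `ρ(x,y) = ‖(x,y) − (x₀,y₀)‖`,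
`g'(ρ) = ρ h(ρ)`, velocity `v = (h(ρ)(y−y₀), −h(ρ)(x−x₀))` (i.e. `v = −h(ρ)·(x−x₀,y−y₀)⊥`)
and pressure `p = P₀ − c g(ρ)`, the pair `(v, p)` is, away from the center, a stationary
solution of the acoustic system with Coriolis source:
`∇p = c v⊥` (componentwise `∂_x p = c v₂`, `∂_y p = −c v₁`, with `w⊥ = (w₂,−w₁)`)
and `∇·v = 0`. -/
theorem stmt3
    (c P₀ x₀ y₀ : ℝ) (hc : 0 < c)
    (h g : ℝ → ℝ)
    (hh : ContDiff ℝ 1 h)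
    (hg : ∀ ρ : ℝ, 0 < ρ → HasDerivAt g (ρ * h ρ) ρ)
    (ρ : ℝ → ℝ → ℝ) (hρ : ∀ x y, ρ x y = Real.sqrt ((x - x₀) ^ 2 + (y - y₀) ^ 2))
    (v₁ v₂ p : ℝ → ℝ → ℝ)
    (hv₁ : ∀ x y, v₁ x y = h (ρ x y) * (y - y₀))
    (hv₂ : ∀ x y, v₂ x y = -(h (ρ x y) * (x - x₀)))
    (hp : ∀ x y, p x y = P₀ - c * g (ρ x y)) :
    ∀ x y : ℝ, (x, y) ≠ (x₀, y₀) →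
      deriv (fun x' => p x' y) x = c * v₂ x y ∧
      deriv (fun y' => p x y') y = -(c * v₁ x y) ∧
      deriv (fun x' => v₁ x' y) x + deriv (fun y' => v₂ x y') y = 0 := by
  intro x y hxy
  have hne : (x - x₀) ^ 2 + (y - y₀) ^ 2 ≠ 0 := by
    intro h0
    apply hxy
    have hx : x - x₀ = 0 := by nlinarith [sq_nonneg (x - x₀), sq_nonneg (y - y₀)]
    have hy : y - y₀ = 0 := by nlinarith [sq_nonneg (x - x₀), sq_nonneg (y - y₀)]
    have : x = x₀ := by linarith
    have : y = y₀ := by linarith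
    simp_all
  set r := Real.sqrt ((x - x₀) ^ 2 + (y - y₀) ^ 2) with hrdef
  have hrxy : ρ x y = r := hρ x y
  have hrpos : 0 < r :=
    Real.sqrt_pos.mpr (lt_of_le_of_ne (by positivity) (Ne.symm hne))
  have hr2 : r ^ 2 = (x - x₀) ^ 2 + (y - y₀) ^ 2 := Real.sq_sqrt (by positivity)
  -- derivative of ρ in x
  have hdx : HasDerivAt (fun x' => ρ x' y) ((x - x₀) / r) x := by
    have h1 : HasDerivAt (fun x' => (x' - x₀) ^ 2 + (y - y₀) ^ 2) (2 * (x - x₀)) x := by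
      simpa [mul_comm] using (((hasDerivAt_id x).sub_const x₀).pow 2).add_const ((y - y₀) ^ 2)
    have h2 := (Real.hasDerivAt_sqrt hne).comp x h1
    have : (fun x' => ρ x' y) = fun x' => Real.sqrt ((x' - x₀) ^ 2 + (y - y₀) ^ 2) := by
      funext x'; exact hρ x' y
    rw [this]
    refine h2.congr_deriv ?_
    rw [← hrdef]
    field_simp
  have hdy : HasDerivAt (fun y' => ρ x y') ((y - y₀) / r) y := by
    have h1 : HasDerivAt (fun y' => (x - x₀) ^ 2 + (y' - y₀) ^ 2) (2 * (y - y₀)) y := by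
      simpa [mul_comm] using ((((hasDerivAt_id y).sub_const y₀).pow 2).const_add ((x - x₀) ^ 2))
    have h2 := (Real.hasDerivAt_sqrt hne).comp y h1
    have : (fun y' => ρ x y') = fun y' => Real.sqrt ((x - x₀) ^ 2 + (y' - y₀) ^ 2) := by
      funext y'; exact hρ x y'
    rw [this]
    refine h2.congr_deriv ?_
    rw [← hrdef]
    field_simp
  have hhr : HasDerivAt h (deriv h r) r :=
    ((hh.differentiable one_ne_zero) r).hasDerivAt
  set h' := deriv h r with hh'def
  have hrne : r ≠ 0 := ne_of_gt hrpos
  -- p derivatives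
  have hpx : HasDerivAt (fun x' => p x' y) (c * v₂ x y) x := by
    have hgc : HasDerivAt (fun x' => g (ρ x' y)) (r * h r * ((x - x₀) / r)) x := by
      have h0 : HasDerivAt g (r * h r) (ρ x y) := hrxy ▸ hg r hrpos
      exact h0.comp x hdx
    have : HasDerivAt (fun x' => P₀ - c * g (ρ x' y)) (-(c * (r * h r * ((x - x₀) / r)))) x :=
      (hgc.const_mul c).const_sub P₀
    have heq : (fun x' => p x' y) = fun x' => P₀ - c * g (ρ x' y) := by
      funext x'; exact hp x' y
    rw [heq]
    convert this using 1
    rw [hv₂, hrxy]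
    field_simp
  have hpy : HasDerivAt (fun y' => p x y') (-(c * v₁ x y)) y := by
    have hgc : HasDerivAt (fun y' => g (ρ x y')) (r * h r * ((y - y₀) / r)) y := by
      have h0 : HasDerivAt g (r * h r) (ρ x y) := hrxy ▸ hg r hrpos
      exact h0.comp y hdy
    have : HasDerivAt (fun y' => P₀ - c * g (ρ x y')) (-(c * (r * h r * ((y - y₀) / r)))) y :=
      (hgc.const_mul c).const_sub P₀
    have heq : (fun y' => p x y') = fun y' => P₀ - c * g (ρ x y') := by
      funext y'; exact hp x y'
    rw [heq]
    convert this using 1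
    rw [hv₁, hrxy]
    field_simp
  -- velocity derivatives
  have hv1x : HasDerivAt (fun x' => v₁ x' y) (h' * ((x - x₀) / r) * (y - y₀)) x := by
    have hhc : HasDerivAt (fun x' => h (ρ x' y)) (h' * ((x - x₀) / r)) x := by
      have h0 : HasDerivAt h h' (ρ x y) := hrxy ▸ hhr
      exact h0.comp x hdx
    have : HasDerivAt (fun x' => h (ρ x' y) * (y - y₀)) (h' * ((x - x₀) / r) * (y - y₀)) x :=
      hhc.mul_const (y - y₀)
    have heq : (fun x' => v₁ x' y) = fun x' => h (ρ x' y) * (y - y₀) := by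
      funext x'; exact hv₁ x' y
    rw [heq]; exact this
  have hv2y : HasDerivAt (fun y' => v₂ x y')
      (-(h' * ((y - y₀) / r) * (x - x₀))) y := by
    have hhc : HasDerivAt (fun y' => h (ρ x y')) (h' * ((y - y₀) / r)) y := by
      have h0 : HasDerivAt h h' (ρ x y) := hrxy ▸ hhr
      exact h0.comp y hdy
    have hid : HasDerivAt (fun y' : ℝ => x - x₀) 0 y := hasDerivAt_const y _
    have hmul : HasDerivAt (fun y' => h (ρ x y') * (x - x₀))
        (h' * ((y - y₀) / r) * (x - x₀)) y := hhc.mul_const (x - x₀)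
    have heq : (fun y' => v₂ x y') = fun y' => -(h (ρ x y') * (x - x₀)) := by
      funext y'; exact hv₂ x y'
    rw [heq]
    exact hmul.neg
  refine ⟨hpx.deriv, hpy.deriv, ?_⟩
  rw [hv1x.deriv, hv2y.deriv]
  field_simp
  ring
end

section
/- Let M, D_x, I_x be matrices indexed by nodes of a 1D continuous finite element space, and similarly in y, and suppose vectors σˣ, σʸ, σ_u, σ_v depend only on the x-index resp. y-index (i.e., (σˣ)_{i,p;j,ℓ} is independent of (j,ℓ) and (σʸ)_{i,p;j,ℓ} independent of (i,p)). Then (D_x ⊗ D_y)(σˣ + σʸ) = 0, (D_x ⊗ 1_y) σʸ = 0, and (1_x ⊗ D_y) σˣ = 0, where D_x is any matrix annihilating constant vectors (D_x 𝟙 = 0) and 1 denotes the identity. Consequently, any nodal data (u, v, p) satisfying p − K_u = σ_u(y-only), p − K_v = σ_v(x-only), and U + V − K_p = σˣ(x-only) + σʸ(y-only) lies in the kernel of the spatial operator of the global-flux Galerkin scheme: D_x ⊗ M_y (p − K_u) = 0, M_x ⊗ D_y (p − K_v) = 0, and D_x ⊗ D_y (U + V − K_p) = 0. -/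
/-- Kronecker product of two square matrices, acting on vectors indexed by pairs of nodes. -/
def kron {ι κ : Type*} (A : Matrix ι ι ℝ) (B : Matrix κ κ ℝ) :
    Matrix (ι × κ) (ι × κ) ℝ :=
  fun pq rs => A pq.1 rs.1 * B pq.2 rs.2

lemma kron_left_kill {ι κ : Type*} [Fintype ι] [Fintype κ]
    (A : Matrix ι ι ℝ) (B : Matrix κ κ ℝ)
    (hA : A.mulVec (fun _ => (1 : ℝ)) = 0) (g : κ → ℝ) :
    (kron A B).mulVec (fun q => g q.2) = 0 := by
  funext q
  have hA' : ∑ j, A q.1 j = 0 := by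
    have := congrFun hA q.1
    simpa [Matrix.mulVec, dotProduct] using this
  simp only [Matrix.mulVec, kron, Pi.zero_apply]
  rw [dotProduct, Fintype.sum_prod_type]
  have : ∀ j : ι, ∑ ℓ, A q.1 j * B q.2 ℓ * g ℓ = A q.1 j * ∑ ℓ, B q.2 ℓ * g ℓ := by
    intro j; rw [Finset.mul_sum]; congr 1; funext ℓ; ring
  simp_rw [this]
  rw [← Finset.sum_mul, hA', zero_mul]

lemma kron_right_kill {ι κ : Type*} [Fintype ι] [Fintype κ]
    (A : Matrix ι ι ℝ) (B : Matrix κ κ ℝ)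
    (hB : B.mulVec (fun _ => (1 : ℝ)) = 0) (g : ι → ℝ) :
    (kron A B).mulVec (fun q => g q.1) = 0 := by
  funext q
  have hB' : ∑ ℓ, B q.2 ℓ = 0 := by
    have := congrFun hB q.2
    simpa [Matrix.mulVec, dotProduct] using this
  simp only [Matrix.mulVec, kron, Pi.zero_apply]
  rw [dotProduct, Fintype.sum_prod_type]
  have : ∀ j : ι, ∑ ℓ, A q.1 j * B q.2 ℓ * g j = A q.1 j * g j * ∑ ℓ, B q.2 ℓ := by
    intro j; rw [Finset.mul_sum]; congr 1; funext ℓ; ring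
  simp_rw [this, hB', mul_zero]
  simp

lemma kron_sum_kill {ι κ : Type*} [Fintype ι] [Fintype κ]
    (A : Matrix ι ι ℝ) (B : Matrix κ κ ℝ)
    (hA : A.mulVec (fun _ => (1 : ℝ)) = 0)
    (hB : B.mulVec (fun _ => (1 : ℝ)) = 0) (gx : ι → ℝ) (gy : κ → ℝ) :
    (kron A B).mulVec (fun q => gx q.1 + gy q.2) = 0 := by
  have : (fun q : ι × κ => gx q.1 + gy q.2)
      = (fun q : ι × κ => gx q.1) + (fun q : ι × κ => gy q.2) := rfl
  rw [this, Matrix.mulVec_add, kron_left_kill A B hA gy, kron_right_kill A B hB gx, add_zero]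

/-- Nodal data whose steady residuals are functions of one direction only lie in the kernel
of the global-flux Galerkin spatial operator.  If `D_x 𝟙 = 0` and `D_y 𝟙 = 0`, then:
(i) for any `gx` depending only on the `x`-index and `gy` only on the `y`-index,
`(D_x ⊗ D_y)(gx + gy) = 0`, `(D_x ⊗ 1_y) gy = 0` and `(1_x ⊗ D_y) gx = 0`; and
(ii) any nodal data `(u, v, p)` with `p − K_u` depending only on `y`, `p − K_v` only on `x`,
and `U + V − K_p = σˣ + σʸ` satisfies
`(D_x ⊗ M_y)(p − K_u) = 0`, `(M_x ⊗ D_y)(p − K_v) = 0`, `(D_x ⊗ D_y)(U + V − K_p) = 0`,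
where `U = (1_x ⊗ I_y) u`, `V = (I_x ⊗ 1_y) v`, `K_u = (I_x ⊗ 1_y) S_u`,
`K_v = (1_x ⊗ I_y) S_v`, `K_p = (I_x ⊗ I_y) S_p`. -/
theorem stmt9
    {ι κ : Type*} [Fintype ι] [Fintype κ] [DecidableEq ι] [DecidableEq κ]
    (Mx Dx Ix : Matrix ι ι ℝ) (My Dy Iy : Matrix κ κ ℝ)
    (hDx : Dx.mulVec (fun _ => (1 : ℝ)) = 0)
    (hDy : Dy.mulVec (fun _ => (1 : ℝ)) = 0)
    (u v pvec Su Sv Sp : ι × κ → ℝ)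
    (U V Ku Kv Kp : ι × κ → ℝ)
    (hU : U = (kron 1 Iy).mulVec u)
    (hV : V = (kron Ix 1).mulVec v)
    (hKu : Ku = (kron Ix 1).mulVec Su)
    (hKv : Kv = (kron 1 Iy).mulVec Sv)
    (hKp : Kp = (kron Ix Iy).mulVec Sp)
    (fu : κ → ℝ) (hfu : ∀ q : ι × κ, pvec q - Ku q = fu q.2)
    (fv : ι → ℝ) (hfv : ∀ q : ι × κ, pvec q - Kv q = fv q.1)
    (σx : ι → ℝ) (σy : κ → ℝ)
    (hσ : ∀ q : ι × κ, U q + V q - Kp q = σx q.1 + σy q.2) :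
    (∀ (gx : ι → ℝ) (gy : κ → ℝ),
      (kron Dx Dy).mulVec (fun q => gx q.1 + gy q.2) = 0 ∧
      (kron Dx 1).mulVec (fun q => gy q.2) = 0 ∧
      (kron 1 Dy).mulVec (fun q => gx q.1) = 0) ∧
    (kron Dx My).mulVec (fun q => pvec q - Ku q) = 0 ∧
    (kron Mx Dy).mulVec (fun q => pvec q - Kv q) = 0 ∧
    (kron Dx Dy).mulVec (fun q => U q + V q - Kp q) = 0 := by
  refine ⟨fun gx gy => ⟨kron_sum_kill Dx Dy hDx hDy gx gy,
    kron_left_kill Dx 1 hDx gy, kron_right_kill 1 Dy hDy gx⟩, ?_, ?_, ?_⟩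
  · have : (fun q : ι × κ => pvec q - Ku q) = fun q : ι × κ => fu q.2 := funext hfu
    rw [this]; exact kron_left_kill Dx My hDx fu
  · have : (fun q : ι × κ => pvec q - Kv q) = fun q : ι × κ => fv q.1 := funext hfv
    rw [this]; exact kron_right_kill Mx Dy hDy fv
  · have : (fun q : ι × κ => U q + V q - Kp q) = fun q : ι × κ => σx q.1 + σy q.2 := funext hσ
    rw [this]; exact kron_sum_kill Dx Dy hDx hDy σx σy
end

section
/- Let ℒ be a skew-adjoint operator on a real inner product space (⟨ℒa, b⟩ = −⟨a, ℒb⟩), S a fixed element, τ ≥ 0, and suppose Q(t) satisfies the SUPG-type variational identity ⟨w + τℒw, ∂_t Q + ℒQ − S⟩ = 0 for all test elements w, with the choice w = Q + τ∂_t Q − τS admissible. Then d/dt (½‖Q‖² + ½τ²‖ℒQ‖²) = ⟨Q, S⟩ + τ²⟨ℒS, ℒQ⟩ − τ‖∂_t Q + ℒQ − S‖² ≤ ⟨Q, S⟩ + τ²⟨ℒS, ℒQ⟩. -/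
open RealInnerProductSpace

/-- Abstract energy estimate for the SUPG-stabilized scheme: if `ℒ` is skew-adjoint,
`τ ≥ 0`, and `Q` satisfies the SUPG variational identity tested with
`w = Q + τ ∂_t Q − τ S`, then
`d/dt (½‖Q‖² + ½τ²‖ℒQ‖²) = ⟨Q,S⟩ + τ²⟨ℒS,ℒQ⟩ − τ‖∂_t Q + ℒQ − S‖²
  ≤ ⟨Q,S⟩ + τ²⟨ℒS,ℒQ⟩`. -/
theorem stmt14
    {H : Type*} [NormedAddCommGroup H] [InnerProductSpace ℝ H]
    (L : H →L[ℝ] H) (hL : ∀ a b : H, ⟪L a, b⟫ = -⟪a, L b⟫)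
    (S : H) (τ : ℝ) (hτ : 0 ≤ τ)
    (Q Q' : ℝ → H) (hQ : ∀ t, HasDerivAt Q (Q' t) t)
    (hQ' : Continuous Q')
    (hSUPG : ∀ t,
      ⟪(Q t + τ • Q' t - τ • S) + τ • L (Q t + τ • Q' t - τ • S),
        Q' t + L (Q t) - S⟫ = 0) :
    ∀ t : ℝ,
      HasDerivAt (fun s => (1 / 2) * ‖Q s‖ ^ 2 + (1 / 2) * τ ^ 2 * ‖L (Q s)‖ ^ 2)
        (⟪Q t, S⟫ + τ ^ 2 * ⟪L S, L (Q t)⟫ - τ * ‖Q' t + L (Q t) - S‖ ^ 2) t ∧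
      ⟪Q t, S⟫ + τ ^ 2 * ⟪L S, L (Q t)⟫ - τ * ‖Q' t + L (Q t) - S‖ ^ 2
        ≤ ⟪Q t, S⟫ + τ ^ 2 * ⟪L S, L (Q t)⟫ := by
  have hL0 : ∀ a : H, ⟪a, L a⟫ = (0 : ℝ) := by
    intro a
    have h1 := hL a a
    have h2 : ⟪L a, a⟫ = ⟪a, L a⟫ := real_inner_comm _ _
    linarith
  intro t
  set q := Q t with hqdef
  set p := Q' t with hpdef
  set R := p + L q - S with hRdef
  -- the scalar energy identity coming from the SUPG identity
  have key : ⟪q, p⟫ + τ ^ 2 * ⟪L q, L p⟫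
      = ⟪q, S⟫ + τ ^ 2 * ⟪L S, L q⟫ - τ * ‖R‖ ^ 2 := by
    have hvec : (q + τ • p - τ • S) + τ • L (q + τ • p - τ • S)
        = q + τ • R + τ ^ 2 • L R - τ ^ 2 • L (L q) := by
      rw [hRdef]
      simp only [map_add, map_sub, map_smul]
      module
    have h : ⟪q + τ • R + τ ^ 2 • L R - τ ^ 2 • L (L q), R⟫ = (0 : ℝ) := by
      rw [← hvec]
      exact hSUPG t
    have h' : ⟪q, R⟫ + τ * ⟪R, R⟫ + τ ^ 2 * ⟪L R, R⟫ - τ ^ 2 * ⟪L (L q), R⟫ = 0 := by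
      simpa [inner_add_left, inner_sub_left, inner_smul_left] using h
    have a1 : ⟪L R, R⟫ = (0 : ℝ) := by
      rw [real_inner_comm]; exact hL0 R
    have a2 : ⟪L (L q), R⟫ = -⟪L q, L R⟫ := hL (L q) R
    have a3 : ⟪q, R⟫ = ⟪q, p⟫ - ⟪q, S⟫ := by
      rw [hRdef]
      simp [inner_add_right, inner_sub_right, hL0 q]
    have a4 : ⟪L q, L R⟫ = ⟪L q, L p⟫ - ⟪L S, L q⟫ := by
      rw [hRdef]
      simp only [map_add, map_sub, inner_add_right, inner_sub_right, hL0 (L q)]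
      rw [real_inner_comm (L q) (L S)]
      ring
    have a5 : ⟪R, R⟫ = ‖R‖ ^ 2 := real_inner_self_eq_norm_sq R
    linear_combination h' - a3 - τ ^ 2 * a4 - τ * a5 - τ ^ 2 * a1 + τ ^ 2 * a2
  constructor
  · have dQ := hQ t
    have dLQ : HasDerivAt (fun s => L (Q s)) (L (Q' t)) t :=
      L.hasFDerivAt.comp_hasDerivAt t dQ
    have d1 := (dQ.inner ℝ dQ).const_mul ((1 : ℝ) / 2)
    have d2 := (dLQ.inner ℝ dLQ).const_mul (1 / 2 * τ ^ 2)
    have dsum := d1.add d2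
    have hfun : (fun s => (1 / 2) * ‖Q s‖ ^ 2 + (1 / 2) * τ ^ 2 * ‖L (Q s)‖ ^ 2)
        = fun s => 1 / 2 * ⟪Q s, Q s⟫ + 1 / 2 * τ ^ 2 * ⟪L (Q s), L (Q s)⟫ := by
      funext s
      rw [real_inner_self_eq_norm_sq, real_inner_self_eq_norm_sq]
    rw [hfun]
    convert dsum using 1
    · rfl
    · rfl
    · rfl
    have s1 : ⟪q, p⟫ = ⟪p, q⟫ := real_inner_comm _ _
    have s2 : ⟪L q, L p⟫ = ⟪L p, L q⟫ := real_inner_comm _ _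
    linear_combination -key + (1 / 2) * s1 + (τ ^ 2 / 2) * s2
  · have : 0 ≤ τ * ‖R‖ ^ 2 := by positivity
    linarith
end

section
/- Let ℒ be a skew-adjoint operator on a real inner product space H, S ∈ H, τ ≥ 0. Suppose Q(t), Π(t) ∈ H satisfy the OSS variational identities ⟨w, ∂_t Q + ℒQ − S⟩ + τ⟨ℒw, ℒQ − S − Π⟩ = 0 and ⟨w, Π − (ℒQ − S)⟩ = 0 for all w ∈ H. Then d/dt (½‖Q‖²) = ⟨Q, S⟩ − τ‖ℒQ − S − Π‖² ≤ ⟨Q, S⟩. -/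
open RealInnerProductSpace

/-- Abstract energy estimate for the OSS-stabilized scheme: if `ℒ` is skew-adjoint, `τ ≥ 0`,
and `Q, Pp` satisfy the OSS variational identities for all test elements `w`, then
`d/dt (½‖Q‖²) = ⟨Q,S⟩ − τ‖ℒQ − S − Pp‖² ≤ ⟨Q,S⟩`. -/
theorem stmt15
    {H : Type*} [NormedAddCommGroup H] [InnerProductSpace ℝ H]
    (L : H →L[ℝ] H) (hL : ∀ a b : H, ⟪L a, b⟫ = -⟪a, L b⟫)
    (S : H) (τ : ℝ) (hτ : 0 ≤ τ)
    (Q Q' Pp : ℝ → H) (hQ : ∀ t, HasDerivAt Q (Q' t) t)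
    (hOSS₁ : ∀ t, ∀ w : H,
      ⟪w, Q' t + L (Q t) - S⟫ + τ * ⟪L w, L (Q t) - S - Pp t⟫ = 0)
    (hOSS₂ : ∀ t, ∀ w : H, ⟪w, Pp t - (L (Q t) - S)⟫ = 0) :
    ∀ t : ℝ,
      HasDerivAt (fun s => (1 / 2) * ‖Q s‖ ^ 2)
        (⟪Q t, S⟫ - τ * ‖L (Q t) - S - Pp t‖ ^ 2) t ∧
      ⟪Q t, S⟫ - τ * ‖L (Q t) - S - Pp t‖ ^ 2 ≤ ⟪Q t, S⟫ := by
  intro t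
  -- The second identity with test element `Pp t - (L (Q t) - S)` forces `Pp t = L (Q t) - S`.
  have hE : L (Q t) - S - Pp t = 0 := by
    have h := hOSS₂ t (Pp t - (L (Q t) - S))
    have h0 : Pp t - (L (Q t) - S) = 0 :=
      inner_self_eq_zero.mp h
    have hPp : Pp t = L (Q t) - S := sub_eq_zero.mp h0
    rw [hPp]; abel
  -- Skew-adjointness: ⟪Q, L Q⟫ = 0.
  have hskew : ⟪Q t, L (Q t)⟫ = 0 := by
    have := hL (Q t) (Q t)
    rw [real_inner_comm] at this
    linarith
  -- First identity with w = Q t.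
  have h1 := hOSS₁ t (Q t)
  rw [hE] at h1
  simp only [inner_zero_right, mul_zero, add_zero] at h1
  have hQQ' : ⟪Q t, Q' t⟫ = ⟪Q t, S⟫ := by
    rw [inner_sub_right, inner_add_right] at h1
    linarith
  have hnorm : ‖L (Q t) - S - Pp t‖ ^ 2 = 0 := by rw [hE]; simp
  constructor
  · have hd0 := ((hQ t).inner ℝ (hQ t)).const_mul (1 / 2 : ℝ)
    have heq : (fun s => (1 / 2 : ℝ) * ‖Q s‖ ^ 2)
        = fun s => (1 / 2 : ℝ) * ⟪Q s, Q s⟫ :=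
      funext fun s => by rw [real_inner_self_eq_norm_sq]
    rw [heq]
    convert hd0 using 1
    · rfl
    · rfl
    have hc : ⟪Q' t, Q t⟫ = ⟪Q t, S⟫ := by rw [real_inner_comm]; exact hQQ'
    simp only [hc, hnorm, real_inner_comm (Q t) (Q' t), hQQ']; ring
  · nlinarith [sq_nonneg ‖L (Q t) - S - Pp t‖]
end
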